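/- Let ℚ be a shift-invariant probability measure on 𝒜^ℕ and suppose there exist ℓ ∈ ℕ and ψ' ∈ (0,1) such that ℚ(A ∩ σ^{−s−ℓ}[a]) ≥ ψ'·ℚ(A)·ℚₙ(a) for every n, every word a ∈ 𝒜ⁿ, every s ∈ ℕ, and every event A measurable with respect to coordinates 1,…,s. Then for every word a with ℚₙ(a) > 0 and every J ∈ ℕ: ℚ({y : y_{j(n+ℓ)+1}^{j(n+ℓ)+n} ≠ a for all 0 ≤ j < J}) ≤ (1 − ψ'·ℚₙ(a))^{J−1}·(1 − ℚₙ(a)). -/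

import Mathlib

open MeasureTheory Filter Finset

variable {𝒜 : Type*}

/-- The left shift on one-sided sequences. -/
def shift : (ℕ → 𝒜) → (ℕ → 𝒜) := fun x n => x (n + 1)

/-- The `n`-prefix of a sequence (0-indexed). -/
def pref (n : ℕ) (x : ℕ → 𝒜) : Fin n → 𝒜 := fun i => x i.val

/-- The cylinder determined by a word. -/
def cyl {n : ℕ} (a : Fin n → 𝒜) : Set (ℕ → 𝒜) := {x | pref n x = a}

/-- The `n`-th marginal of a measure, as a real-valued function on words. -/
noncomputable def marg [MeasurableSpace 𝒜] (P : Measure (ℕ → 𝒜)) (n : ℕ)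
    (a : Fin n → 𝒜) : ℝ := (P (cyl a)).toReal

/-- The reversal of a word with respect to an involution `θ`. -/
def wordRev (θ : 𝒜 → 𝒜) {n : ℕ} (a : Fin n → 𝒜) : Fin n → 𝒜 := fun i => θ (a i.rev)

/-- Shift invariance of a measure. -/
def ShiftInv [MeasurableSpace 𝒜] (P : Measure (ℕ → 𝒜)) : Prop :=
  ∀ s : Set (ℕ → 𝒜), P (shift ⁻¹' s) = P s

/-- Under a `ψ'`-type lower-mixing bound at lag `ℓ` for `ℚ`, iterating the conditional
estimate yields: for every word `a` with `ℚₙ(a) > 0` and every `J ≥ 1`,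
`ℚ({y : y_{j(n+ℓ)+1}^{j(n+ℓ)+n} ≠ a for all 0 ≤ j < J}) ≤ (1−ψ'ℚₙ(a))^{J−1}(1−ℚₙ(a))`. -/
theorem psi_prime_avoidance_bound [Fintype 𝒜] [MeasurableSpace 𝒜]
    [MeasurableSingletonClass 𝒜]
    (Q : Measure (ℕ → 𝒜)) [IsProbabilityMeasure Q] (hQ : ShiftInv Q)
    (ℓ : ℕ) (ψ' : ℝ) (hψ0 : 0 < ψ') (hψ1 : ψ' < 1)
    (hmix : ∀ (s : ℕ) (A : Set (ℕ → 𝒜)), MeasurableSet A →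
      (∀ y z : ℕ → 𝒜, (∀ i < s, y i = z i) → y ∈ A → z ∈ A) →
      ∀ (n : ℕ) (a : Fin n → 𝒜),
        ψ' * (Q A).toReal * marg Q n a ≤
          (Q (A ∩ {y | ∀ i : Fin n, y (s + ℓ + i.val) = a i})).toReal) :
    ∀ (n : ℕ) (a : Fin n → 𝒜), 0 < marg Q n a → ∀ J : ℕ, 1 ≤ J →
      (Q {y | ∀ j < J, ¬ ∀ i : Fin n, y (j * (n + ℓ) + i.val) = a i}).toReal ≤
        (1 - ψ' * marg Q n a) ^ (J - 1) * (1 - marg Q n a) := by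

  intro n a hma J hJ
  obtain ⟨K, rfl⟩ : ∃ K, J = K + 1 := ⟨J - 1, by omega⟩
  simp only [Nat.add_sub_cancel]
  set m := marg Q n a with hm
  have hcylm : MeasurableSet (cyl a) := by
    have hrw : cyl a = ⋂ i : Fin n, (fun y : ℕ → 𝒜 => y i.val) ⁻¹' {a i} := by
      ext y
      simp only [cyl, pref, Set.mem_setOf_eq, Set.mem_iInter, Set.mem_preimage,
        Set.mem_singleton_iff, funext_iff]
    rw [hrw]
    exact MeasurableSet.iInter fun i => (measurable_pi_apply _) (measurableSet_singleton _)
  have hm0 : 0 ≤ m := ENNReal.toReal_nonneg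
  have hm1 : m ≤ 1 := by
    have h := prob_le_one (μ := Q) (s := cyl a)
    have := ENNReal.toReal_mono (by simp) h
    simpa [hm, marg] using this
  have hBmeas : ∀ c : ℕ, MeasurableSet {y : ℕ → 𝒜 | ∀ i : Fin n, y (c + i.val) = a i} := by
    intro c
    have hrw : {y : ℕ → 𝒜 | ∀ i : Fin n, y (c + i.val) = a i}
        = ⋂ i : Fin n, (fun y : ℕ → 𝒜 => y (c + i.val)) ⁻¹' {a i} := by
      ext y; simp [Set.mem_iInter]
    rw [hrw]
    exact MeasurableSet.iInter fun i => (measurable_pi_apply _) (measurableSet_singleton _)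
  have hAmeas : ∀ J : ℕ,
      MeasurableSet {y : ℕ → 𝒜 | ∀ j < J, ¬ ∀ i : Fin n, y (j * (n + ℓ) + i.val) = a i} := by
    intro J
    have hrw : {y : ℕ → 𝒜 | ∀ j < J, ¬ ∀ i : Fin n, y (j * (n + ℓ) + i.val) = a i}
        = ⋂ j : ℕ, ⋂ (_ : j < J),
            {y : ℕ → 𝒜 | ∀ i : Fin n, y (j * (n + ℓ) + i.val) = a i}ᶜ := by
      ext y; simp [Set.mem_iInter]
    rw [hrw]
    exact MeasurableSet.iInter fun j => MeasurableSet.iInter fun _ =>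
      (hBmeas (j * (n + ℓ))).compl
  induction K with
  | zero =>
    have hA1 : {y : ℕ → 𝒜 | ∀ j < 1, ¬ ∀ i : Fin n, y (j * (n + ℓ) + i.val) = a i}
        = (cyl a)ᶜ := by
      ext y
      simp only [Set.mem_setOf_eq, Set.mem_compl_iff, cyl, pref, funext_iff]
      constructor
      · intro h hc
        exact h 0 (by omega) (by intro i; simpa using hc i)
      · intro h j hj hc
        interval_cases j
        exact h (by intro i; simpa using hc i)
    rw [hA1, pow_zero, one_mul]
    rw [prob_compl_eq_one_sub hcylm]
    rw [ENNReal.toReal_sub_of_le (prob_le_one) (by simp)]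
    simp [hm, marg]
  | succ K ih =>
    have ihK := ih (by omega)
    set s := K * (n + ℓ) + n with hs
    set A := {y : ℕ → 𝒜 | ∀ j < K + 1, ¬ ∀ i : Fin n, y (j * (n + ℓ) + i.val) = a i} with hA
    set B := {y : ℕ → 𝒜 | ∀ i : Fin n, y (s + ℓ + i.val) = a i} with hB
    have hBm : MeasurableSet B := hBmeas (s + ℓ)
    have hAm : MeasurableSet A := hAmeas (K + 1)
    have hdep : ∀ y z : ℕ → 𝒜, (∀ i < s, y i = z i) → y ∈ A → z ∈ A := by
      intro y z hagree hy j hj hc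
      refine hy j hj ?_
      intro i
      have hco : j * (n + ℓ) + i.val < s := by
        have h1 : j * (n + ℓ) ≤ K * (n + ℓ) := Nat.mul_le_mul_right _ (by omega)
        have h2 : i.val < n := i.isLt
        omega
      rw [hagree _ hco]
      exact hc i
    have hmixA := hmix s A hAm hdep n a
    have hsplit : {y : ℕ → 𝒜 | ∀ j < K + 1 + 1, ¬ ∀ i : Fin n, y (j * (n + ℓ) + i.val) = a i}
        = A \ B := by
      ext y
      simp only [Set.mem_setOf_eq, Set.mem_diff, hA, hB]
      constructor
      · intro h
        refine ⟨fun j hj => h j (by omega), ?_⟩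
        intro hc
        refine h (K + 1) (by omega) ?_
        intro i
        have : (K + 1) * (n + ℓ) + i.val = s + ℓ + i.val := by rw [hs]; ring
        rw [this]; exact hc i
      · rintro ⟨h1, h2⟩ j hj hc
        rcases Nat.lt_succ_iff_lt_or_eq.mp hj with hj' | rfl
        · exact h1 j hj' hc
        · refine h2 ?_
          intro i
          have : (K + 1) * (n + ℓ) + i.val = s + ℓ + i.val := by rw [hs]; ring
          rw [← this]; exact hc i
    rw [hsplit]
    have hadd : Q (A ∩ B) + Q (A \ B) = Q A := measure_inter_add_diff A hBm
    have haddR : (Q (A ∩ B)).toReal + (Q (A \ B)).toReal = (Q A).toReal := by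
      rw [← ENNReal.toReal_add (measure_ne_top _ _) (measure_ne_top _ _), hadd]
    have hstep : (Q (A \ B)).toReal ≤ (1 - ψ' * m) * (Q A).toReal := by
      nlinarith [hmixA, ENNReal.toReal_nonneg (a := Q A)]
    have hfac : 0 ≤ 1 - ψ' * m := by nlinarith
    calc (Q (A \ B)).toReal ≤ (1 - ψ' * m) * (Q A).toReal := hstep
      _ ≤ (1 - ψ' * m) * ((1 - ψ' * m) ^ K * (1 - m)) := by
          exact mul_le_mul_of_nonneg_left ihK hfac
      _ = (1 - ψ' * m) ^ (K + 1) * (1 - m) := by ring
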